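/- Fix integers d ≥ 1 and v, f with d+1 < v. Let Z be a zero pattern assigning to each column index j ∈ {1,…,f} a proper subset Z(j) ⊊ {1,…,v}, and let 𝒮 be the set of real v×f matrices S of rank d+1 such that S_{ij} = 0 if and only if i ∈ Z(j). Let F ⊆ {1,…,f} be a set of column indices and let S ∈ 𝒮 be such that (a) the columns of S indexed by F span the column space of S, and (b) for every j ∉ F the rows of S indexed by Z(j) span a d-dimensional subspace. If S′ ∈ 𝒮 and there exist nonzero reals (μ_j)_{j∈F} such that for every j ∈ F the j-th column of S′ equals μ_j times the j-th column of S, then there exist nonzero reals λ_1,…,λ_f with λ_j = μ_j for j ∈ F and S′ = S·diag(λ_1,…,λ_f). In other words, a matrix in 𝒮 is determined, up to scaling of the columns outside F, by its submatrix of columns F. -/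

import Mathlib

open Matrix

/-- The column space of a matrix. -/
noncomputable def colSpace {v k : ℕ} (X : Matrix (Fin v) (Fin k) ℝ) :
    Submodule ℝ (Fin v → ℝ) :=
  LinearMap.range X.mulVecLin

/-- Each column of a matrix belongs to its column space. -/
lemma col_mem_colSpace {v k : ℕ} (A : Matrix (Fin v) (Fin k) ℝ) (j : Fin k) :
    Aᵀ j ∈ colSpace A := by
  refine ⟨Pi.single j 1, ?_⟩
  funext i
  simp [Matrix.mulVecLin_apply]

/-- Lemma (slackProjequivalence, pointwise): an element of the slack variety is determined,
up to scaling the columns outside `F`, by its submatrix of columns `F`, provided the columns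
of `F` span the column space and every column outside `F` satisfies the facet-rank condition. -/
theorem stmt8 (d v f : ℕ) (hd : 1 ≤ d) (hv : d + 1 < v)
    (Z : Fin f → Finset (Fin v)) (hZ : ∀ j, Z j ≠ Finset.univ)
    (𝒮 : Set (Matrix (Fin v) (Fin f) ℝ))
    (h𝒮 : 𝒮 = {S | S.rank = d + 1 ∧ ∀ i j, S i j = 0 ↔ i ∈ Z j})
    (F : Finset (Fin f))
    (S : Matrix (Fin v) (Fin f) ℝ) (hS : S ∈ 𝒮)
    (hspan : Submodule.span ℝ ((fun j => Sᵀ j) '' (F : Set (Fin f))) = colSpace S)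
    (hfacet : ∀ j ∉ F, Module.finrank ℝ
      ↥(Submodule.span ℝ ((fun i => S i) '' (Z j : Set (Fin v)))) = d) :
    ∀ S' ∈ 𝒮, ∀ μ : Fin f → ℝ, (∀ j ∈ F, μ j ≠ 0) →
      (∀ j ∈ F, ∀ i, S' i j = μ j * S i j) →
      ∃ lam : Fin f → ℝ, (∀ j, lam j ≠ 0) ∧ (∀ j ∈ F, lam j = μ j) ∧
        S' = S * Matrix.diagonal lam := by
  intro S' hS' μ hμF hcolF
  rw [h𝒮] at hS hS'
  obtain ⟨hrank, hpat⟩ := hS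
  obtain ⟨hrank', hpat'⟩ := hS'
  -- the two matrices have the same column space
  have hcs : colSpace S ≤ colSpace S' := by
    rw [← hspan]
    refine Submodule.span_le.mpr ?_
    rintro _ ⟨j, hj, rfl⟩
    have h1 := col_mem_colSpace S' j
    have h2 : Sᵀ j = (μ j)⁻¹ • S'ᵀ j := by
      funext i
      have := hcolF j hj i
      have hμ := hμF j hj
      simp only [Matrix.transpose_apply, Pi.smul_apply, smul_eq_mul, this]
      field_simp
    show Sᵀ j ∈ colSpace S'
    rw [h2]
    exact Submodule.smul_mem _ _ h1
  have hfrS : Module.finrank ℝ (colSpace S) = d + 1 := hrank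
  have hfrS' : Module.finrank ℝ (colSpace S') = d + 1 := hrank'
  have hcseq : colSpace S = colSpace S' :=
    Submodule.eq_of_le_of_finrank_eq hcs (by rw [hfrS, hfrS'])
  -- for every column, the column of S' is a nonzero multiple of the column of S
  have key : ∀ j : Fin f, ∃ c : ℝ, c ≠ 0 ∧ ∀ i, S' i j = c * S i j := by
    intro j
    by_cases hj : j ∈ F
    · exact ⟨μ j, hμF j hj, hcolF j hj⟩
    -- restriction to the coordinates in `Z j`
    set ι : ((Z j : Set (Fin v))) → Fin v := fun i => (i : Fin v) with hι
    set ρ : (Fin v → ℝ) →ₗ[ℝ] (((Z j : Set (Fin v))) → ℝ) :=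
      LinearMap.funLeft ℝ ℝ ι with hρ
    set L : ↥(colSpace S) →ₗ[ℝ] (((Z j : Set (Fin v))) → ℝ) :=
      ρ.comp (colSpace S).subtype with hL
    -- the range of L is the column span of the submatrix with rows in `Z j`
    have hrange : LinearMap.range L = LinearMap.range (S.submatrix ι id).mulVecLin := by
      rw [hL, LinearMap.range_comp, Submodule.range_subtype]
      show Submodule.map ρ (LinearMap.range S.mulVecLin) = _
      rw [← LinearMap.range_comp]
      congr 1
    have hrk : Module.finrank ℝ (LinearMap.range L) = d := by
      rw [hrange]
      have h1 : (S.submatrix ι id).rank = d := by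
        rw [← Matrix.rank_transpose, Matrix.rank_eq_finrank_span_cols]
        change Module.finrank ℝ ↥(Submodule.span ℝ (Set.range (S.submatrix ι id))) = d
        have h2 : Set.range (S.submatrix ι id) = (fun i => S i) '' (Z j : Set (Fin v)) := by
          rw [Set.image_eq_range]
          rfl
        rw [h2]
        exact hfacet j hj
      exact h1
    -- rank-nullity gives a one-dimensional kernel
    have hker : Module.finrank ℝ (LinearMap.ker L) = 1 := by
      have hsum := LinearMap.finrank_range_add_finrank_ker L
      rw [hrk, hfrS] at hsum
      omega
    set W : Submodule ℝ (Fin v → ℝ) := colSpace S ⊓ LinearMap.ker ρ with hWdef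
    have hWmap : W = (LinearMap.ker L).map (colSpace S).subtype := by
      rw [hL, LinearMap.ker_comp, Submodule.map_comap_subtype]
    have hW1 : Module.finrank ℝ W = 1 := by
      rw [hWmap, Submodule.finrank_map_subtype_eq]
      exact hker
    -- both j-th columns lie in W
    have hSmem : Sᵀ j ∈ W := by
      refine Submodule.mem_inf.mpr ⟨col_mem_colSpace S j, LinearMap.mem_ker.mpr ?_⟩
      funext i
      have hiZ : (i : Fin v) ∈ Z j := i.2
      simp [hρ, LinearMap.funLeft, hι, (hpat _ j).mpr hiZ]
    have hS'mem : S'ᵀ j ∈ W := by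
      refine Submodule.mem_inf.mpr ⟨hcseq ▸ col_mem_colSpace S' j, LinearMap.mem_ker.mpr ?_⟩
      funext i
      have hiZ : (i : Fin v) ∈ Z j := i.2
      simp [hρ, LinearMap.funLeft, hι, (hpat' _ j).mpr hiZ]
    -- a row index outside Z j
    obtain ⟨i0, hi0⟩ : ∃ i0, i0 ∉ Z j := by
      by_contra h
      push_neg at h
      exact hZ j (Finset.eq_univ_iff_forall.mpr h)
    have hSne : Sᵀ j ≠ 0 := by
      intro h
      have := congrFun h i0
      simp only [Matrix.transpose_apply, Pi.zero_apply] at this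
      exact hi0 ((hpat i0 j).mp this)
    have hxne : (⟨Sᵀ j, hSmem⟩ : W) ≠ 0 := by
      simpa [Submodule.mk_eq_zero] using hSne
    obtain ⟨c, hc⟩ :=
      (finrank_eq_one_iff_of_nonzero' (⟨Sᵀ j, hSmem⟩ : W) hxne).mp hW1 ⟨S'ᵀ j, hS'mem⟩
    have hceq : ∀ i, S' i j = c * S i j := by
      intro i
      have := congrArg (fun x : W => (x : Fin v → ℝ) i) hc
      simpa using this.symm
    refine ⟨c, ?_, hceq⟩
    intro hc0
    have hS'i0 : S' i0 j ≠ 0 := fun h => hi0 ((hpat' i0 j).mp h)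
    exact hS'i0 (by rw [hceq i0, hc0, zero_mul])
  choose lam hlam0 hlameq using key
  refine ⟨fun j => if j ∈ F then μ j else lam j, ?_, ?_, ?_⟩
  · intro j
    by_cases hj : j ∈ F
    · simpa [hj] using hμF j hj
    · simpa [hj] using hlam0 j
  · intro j hj
    simp [hj]
  · ext i j
    rw [Matrix.mul_diagonal]
    by_cases hj : j ∈ F
    · simp only [hj, if_true]
      rw [hcolF j hj i, mul_comm]
    · simp only [hj, if_false]
      rw [hlameq j i, mul_comm]
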